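/- (Linear optimization over a spectratope base equals a generalized eigenvalue; equality of the primal SDP (5.2) and its dual.) Let A, B be symmetric real d×d matrices with B positive definite, and let b > 0. Then the infimum of ⟨A, X⟩ over all positive semidefinite X ∈ ℝ^{d×d} with ⟨B, X⟩ = b is attained and equals b · sSup {γ ∈ ℝ : (A − γ·B).PosSemidef}. -/

import Mathlib

open Matrix

section Helpers

variable {n : Type*} [Fintype n] [DecidableEq n]

private lemma quad_congr (P M : Matrix n n ℝ) (hP : Pᵀ = P) (u : n → ℝ) :
    u ⬝ᵥ ((P * M * P) *ᵥ u) = (P *ᵥ u) ⬝ᵥ (M *ᵥ (P *ᵥ u)) := by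
  rw [← mulVec_mulVec, ← mulVec_mulVec, dotProduct_mulVec u P, ← mulVec_transpose, hP,
    mulVec_mulVec]

private lemma entry_eq_quad (M U : Matrix n n ℝ) (i0 : n) :
    (star U * M * U) i0 i0 = (fun k => U k i0) ⬝ᵥ (M *ᵥ fun k => U k i0) := by
  simp only [mul_apply, dotProduct, mulVec, star_apply, star_trivial, Finset.sum_mul,
    Finset.mul_sum]
  rw [Finset.sum_comm]
  exact Finset.sum_congr rfl fun i _ => Finset.sum_congr rfl fun j _ => by ring

private lemma trace_mul_vecMulVec (M : Matrix n n ℝ) (v w : n → ℝ) :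
    Matrix.trace (M * vecMulVec v w) = w ⬝ᵥ (M *ᵥ v) := by
  simp only [Matrix.trace, diag_apply, mul_apply, vecMulVec_apply, dotProduct, mulVec,
    Finset.mul_sum]
  exact Finset.sum_congr rfl fun i _ => Finset.sum_congr rfl fun j _ => by ring

private lemma posSemidef_vecMulVec_self (w : n → ℝ) : (vecMulVec w w).PosSemidef := by
  refine PosSemidef.of_dotProduct_mulVec_nonneg ?_ fun x => ?_
  · ext i j
    simp [conjTranspose_apply, vecMulVec_apply, mul_comm]
  · have : (vecMulVec w w) *ᵥ x = (w ⬝ᵥ x) • w := by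
      ext i
      simp [mulVec, vecMulVec_apply, dotProduct, Finset.mul_sum, mul_comm, mul_left_comm]
    rw [this]
    simp only [star_trivial, dotProduct_smul, smul_eq_mul, dotProduct_comm x w]
    exact mul_self_nonneg _
  
private lemma trace_conjTranspose_mul_self_nonneg (R : Matrix n n ℝ) :
    0 ≤ Matrix.trace (Rᴴ * R) := by
  simp only [Matrix.trace, diag_apply, mul_apply, conjTranspose_apply, star_trivial]
  exact Finset.sum_nonneg fun j _ => Finset.sum_nonneg fun i _ => mul_self_nonneg _

open scoped MatrixOrder in
private lemma exists_psd_sqrt (M : Matrix n n ℝ) (hM : M.PosSemidef) :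
    ∃ S : Matrix n n ℝ, S.PosSemidef ∧ S * S = M :=
  ⟨CFC.sqrt M, nonneg_iff_posSemidef.mp (CFC.sqrt_nonneg M),
    CFC.sqrt_mul_sqrt_self M (nonneg_iff_posSemidef.mpr hM)⟩

private lemma exists_eq_ct_mul_self {M : Matrix n n ℝ} (hM : M.PosSemidef) :
    ∃ P : Matrix n n ℝ, M = Pᴴ * P := by
  obtain ⟨S, hS, hSS⟩ := exists_psd_sqrt M hM
  exact ⟨S, by rw [hS.isHermitian.eq, hSS]⟩

private lemma trace_mul_nonneg_of_posSemidef {M N : Matrix n n ℝ}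
    (hM : M.PosSemidef) (hN : N.PosSemidef) : 0 ≤ Matrix.trace (M * N) := by
  obtain ⟨P, rfl⟩ := exists_eq_ct_mul_self hM
  obtain ⟨Q, rfl⟩ := exists_eq_ct_mul_self hN
  have h1 : Matrix.trace (Pᴴ * P * (Qᴴ * Q)) = Matrix.trace ((P * Qᴴ)ᴴ * (P * Qᴴ)) := by
    rw [show Pᴴ * P * (Qᴴ * Q) = (Pᴴ * P * Qᴴ) * Q by noncomm_ring,
      Matrix.trace_mul_comm]
    congr 1
    rw [conjTranspose_mul, conjTranspose_conjTranspose]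
    noncomm_ring
  rw [h1]
  exact trace_conjTranspose_mul_self_nonneg _

end Helpers

/-- Linear optimization over a spectratope base equals a generalized eigenvalue: the
infimum of `⟨A, X⟩` over PSD `X` with `⟨B, X⟩ = b` is attained and equals
`b · sSup {γ : (A − γ·B).PosSemidef}`. -/
theorem spectratope_base_inf_eq_gen_eig {d : ℕ} (hd : 0 < d)
    (A B : Matrix (Fin d) (Fin d) ℝ) (hA : Aᵀ = A) (hB : B.PosDef)
    (b : ℝ) (hb : 0 < b) :
    ∃ X : Matrix (Fin d) (Fin d) ℝ, X.PosSemidef ∧ Matrix.trace (Bᵀ * X) = b ∧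
      Matrix.trace (Aᵀ * X) =
        sInf {v : ℝ | ∃ Y : Matrix (Fin d) (Fin d) ℝ, Y.PosSemidef ∧
          Matrix.trace (Bᵀ * Y) = b ∧ Matrix.trace (Aᵀ * Y) = v} ∧
      Matrix.trace (Aᵀ * X) = b * sSup {γ : ℝ | (A - γ • B).PosSemidef} := by
  classical
  have hAH : Aᴴ = A := by rw [conjTranspose_eq_transpose_of_trivial, hA]
  have hBT : Bᵀ = B := by
    rw [← conjTranspose_eq_transpose_of_trivial, hB.isHermitian.eq]
  -- the square root of B and its inverse
  obtain ⟨S, hSpsd, hSS⟩ := exists_psd_sqrt B hB.posSemidef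
  have hSH : Sᴴ = S := hSpsd.isHermitian
  have hST' : Sᵀ = S := by rw [← conjTranspose_eq_transpose_of_trivial, hSH]
  have hSdet : IsUnit S.det := by
    have h1 : S.det * S.det = B.det := by rw [← det_mul, hSS]
    refine isUnit_iff_ne_zero.mpr fun h => ?_
    rw [h, mul_zero] at h1
    exact (ne_of_gt hB.det_pos) h1.symm
  set T : Matrix (Fin d) (Fin d) ℝ := S⁻¹ with hTdef
  have hTS : T * S = 1 := nonsing_inv_mul S hSdet
  have hST : S * T = 1 := mul_nonsing_inv S hSdet
  have hTH : Tᴴ = T := by rw [hTdef, conjTranspose_nonsing_inv, hSH]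
  have hTT : Tᵀ = T := by rw [← conjTranspose_eq_transpose_of_trivial, hTH]
  have hTBT : T * B * T = 1 := by
    rw [← hSS, show T * (S * S) * T = (T * S) * (S * T) by noncomm_ring, hTS, hST, one_mul]
  set C : Matrix (Fin d) (Fin d) ℝ := T * A * T with hCdef
  have hCH : C.IsHermitian := by
    show Cᴴ = C
    rw [hCdef, conjTranspose_mul, conjTranspose_mul, hTH, hAH, mul_assoc]
  have hSCS : S * C * S = A := by
    rw [hCdef, show S * (T * A * T) * S = (S * T) * A * (T * S) by noncomm_ring, hST, hTS,
      one_mul, mul_one]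
  -- spectral data of C
  set U : Matrix (Fin d) (Fin d) ℝ := (hCH.eigenvectorUnitary : Matrix (Fin d) (Fin d) ℝ)
    with hUdef
  have hUU : star U * U = 1 := mem_unitaryGroup_iff'.mp hCH.eigenvectorUnitary.2
  have hUU' : U * star U = 1 := mem_unitaryGroup_iff.mp hCH.eigenvectorUnitary.2
  have hdiag : star U * C * U = diagonal hCH.eigenvalues := by
    have := hCH.conjStarAlgAut_star_eigenvectorUnitary
    simpa [Unitary.conjStarAlgAut_star_apply] using this
  -- the minimal eigenvalue
  obtain ⟨i0, -, hi0⟩ := Finset.exists_min_image Finset.univ hCH.eigenvalues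
    ⟨⟨0, hd⟩, Finset.mem_univ _⟩
  set μ : ℝ := hCH.eigenvalues i0 with hμdef
  have hμmin : ∀ i, μ ≤ hCH.eigenvalues i := fun i => hi0 i (Finset.mem_univ i)
  -- the key characterization of the feasible γ's
  have hkey : ∀ γ : ℝ, (A - γ • B).PosSemidef ↔ γ ≤ μ := by
    intro γ
    have hshift : star U * (C - γ • 1) * U = diagonal (fun i => hCH.eigenvalues i - γ) := by
      rw [mul_sub, sub_mul, hdiag, Matrix.mul_smul, Matrix.smul_mul, mul_one, hUU]
      ext i j
      by_cases h : i = j <;> simp [diagonal_apply, Matrix.one_apply, h]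
    have hACiff : (A - γ • B).PosSemidef ↔ (C - γ • 1).PosSemidef := by
      constructor
      · intro h
        have h2 := h.mul_mul_conjTranspose_same T
        rw [hTH] at h2
        have : T * (A - γ • B) * T = C - γ • 1 := by
          rw [mul_sub, sub_mul, Matrix.mul_smul, Matrix.smul_mul, hTBT, hCdef]
        rwa [this] at h2
      · intro h
        have h2 := h.mul_mul_conjTranspose_same S
        rw [hSH] at h2
        have : S * (C - γ • 1) * S = A - γ • B := by
          rw [mul_sub, sub_mul, Matrix.mul_smul, Matrix.smul_mul, hSCS, mul_one, hSS]
        rwa [this] at h2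
    rw [hACiff]
    constructor
    · intro h
      have h2 := h.conjTranspose_mul_mul_same U
      rw [show Uᴴ = star U from rfl, hshift, posSemidef_diagonal_iff] at h2
      have := h2 i0
      linarith [this]
    · intro hγ
      have hdpsd : (diagonal (fun i => hCH.eigenvalues i - γ)).PosSemidef :=
        posSemidef_diagonal_iff.mpr fun i => by linarith [hμmin i]
      have h2 := hdpsd.mul_mul_conjTranspose_same U
      have : U * diagonal (fun i => hCH.eigenvalues i - γ) * Uᴴ = C - γ • 1 := by
        rw [show Uᴴ = star U from rfl, ← hshift,
          show U * (star U * (C - γ • 1) * U) * star U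
            = (U * star U) * (C - γ • 1) * (U * star U) by noncomm_ring, hUU', one_mul, mul_one]
      rwa [this] at h2
  -- the optimal X
  set u : Fin d → ℝ := fun k => U k i0 with hudef
  set w : Fin d → ℝ := T *ᵥ u with hwdef
  set X : Matrix (Fin d) (Fin d) ℝ := b • vecMulVec w w with hXdef
  have huu : u ⬝ᵥ u = 1 := by
    have h1 : (star U * U) i0 i0 = u ⬝ᵥ (1 *ᵥ u) := by
      simpa using entry_eq_quad (1 : Matrix (Fin d) (Fin d) ℝ) U i0
    rw [hUU, one_mulVec] at h1
    rw [← h1, one_apply_eq]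
  have huCu : u ⬝ᵥ (C *ᵥ u) = μ := by
    have h1 : (star U * C * U) i0 i0 = u ⬝ᵥ (C *ᵥ u) := entry_eq_quad C U i0
    rw [hdiag] at h1
    rw [← h1, diagonal_apply_eq]
  have hwBw : w ⬝ᵥ (B *ᵥ w) = 1 := by
    rw [hwdef, ← quad_congr T B hTT u, hTBT, one_mulVec, huu]
  have hwAw : w ⬝ᵥ (A *ᵥ w) = μ := by
    rw [hwdef, ← quad_congr T A hTT u, ← hCdef, huCu]
  have hXpsd : X.PosSemidef := by
    rw [hXdef]
    obtain ⟨hherm, hdp⟩ := posSemidef_iff_dotProduct_mulVec.mp (posSemidef_vecMulVec_self w)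
    refine PosSemidef.of_dotProduct_mulVec_nonneg ?_ fun x => ?_
    · show (b • vecMulVec w w)ᴴ = b • vecMulVec w w
      rw [conjTranspose_smul, hherm]
      simp
    · rw [smul_mulVec, dotProduct_smul, smul_eq_mul]
      exact mul_nonneg hb.le (hdp x)
  have htrB : Matrix.trace (Bᵀ * X) = b := by
    rw [hBT, hXdef, Matrix.mul_smul, Matrix.trace_smul, trace_mul_vecMulVec, hwBw,
      smul_eq_mul, mul_one]
  have htrA : Matrix.trace (Aᵀ * X) = b * μ := by
    rw [hA, hXdef, Matrix.mul_smul, Matrix.trace_smul, trace_mul_vecMulVec, hwAw, smul_eq_mul]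
  -- lower bound for the objective
  have hAμB : (A - μ • B).PosSemidef := (hkey μ).mpr le_rfl
  have hlower : ∀ v ∈ {v : ℝ | ∃ Y : Matrix (Fin d) (Fin d) ℝ, Y.PosSemidef ∧
      Matrix.trace (Bᵀ * Y) = b ∧ Matrix.trace (Aᵀ * Y) = v}, b * μ ≤ v := by
    rintro v ⟨Y, hY, hYB, hYA⟩
    have h0 : 0 ≤ Matrix.trace ((A - μ • B) * Y) := trace_mul_nonneg_of_posSemidef hAμB hY
    have hexp : Matrix.trace ((A - μ • B) * Y)
        = Matrix.trace (Aᵀ * Y) - μ * Matrix.trace (Bᵀ * Y) := by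
      rw [hA, hBT, sub_mul, Matrix.trace_sub, Matrix.smul_mul, Matrix.trace_smul, smul_eq_mul]
    rw [hexp, hYB, hYA] at h0
    linarith
  have hmem : b * μ ∈ {v : ℝ | ∃ Y : Matrix (Fin d) (Fin d) ℝ, Y.PosSemidef ∧
      Matrix.trace (Bᵀ * Y) = b ∧ Matrix.trace (Aᵀ * Y) = v} := ⟨X, hXpsd, htrB, htrA⟩
  have hsInf : sInf {v : ℝ | ∃ Y : Matrix (Fin d) (Fin d) ℝ, Y.PosSemidef ∧
      Matrix.trace (Bᵀ * Y) = b ∧ Matrix.trace (Aᵀ * Y) = v} = b * μ := by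
    refine le_antisymm (csInf_le ⟨b * μ, hlower⟩ hmem) (le_csInf ⟨b * μ, hmem⟩ hlower)
  have hsSup : sSup {γ : ℝ | (A - γ • B).PosSemidef} = μ := by
    have : {γ : ℝ | (A - γ • B).PosSemidef} = Set.Iic μ := Set.ext fun γ => hkey γ
    rw [this, csSup_Iic]
  exact ⟨X, hXpsd, htrB, by rw [htrA, hsInf], by rw [htrA, hsSup]⟩
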